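/- Let 0 ≤ h̄ ∈ L¹(ℝ^d × ℝ^d) and f, g ∈ L¹(ℝ^d) be nonnegative with equal total mass, and let Γ = Γ(f,g)^{h̄} be the set of nonnegative h ∈ L¹ with marginals f and g satisfying h ≤ h̄ a.e. If h ∈ Γ equals 1_W · h̄ almost everywhere for some Lebesgue measurable set W ⊆ ℝ^d × ℝ^d, then h is an extreme point of the convex set Γ. -/
import Mathlib


open MeasureTheory

/-- Membership in `Γ(f,g)^{h̄}`: nonnegative integrable densities on `ℝ^d × ℝ^d`
with marginals `f` and `g`, dominated by `h̄` a.e. -/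
def memGamma (d : ℕ) (f g : (Fin d → ℝ) → ℝ)
    (hbar h : (Fin d → ℝ) × (Fin d → ℝ) → ℝ) : Prop :=
  Integrable h ∧ (∀ᵐ z, 0 ≤ h z) ∧ (∀ᵐ z, h z ≤ hbar z) ∧
    (∀ᵐ x, ∫ y, h (x, y) = f x) ∧ (∀ᵐ y, ∫ x, h (x, y) = g y)

/-- If `h ∈ Γ(f,g)^{h̄}` agrees a.e. with `1_W ⋅ h̄` for a measurable set `W`,
then `h` is an extreme point of `Γ(f,g)^{h̄}`. -/
theorem stmt2 (d : ℕ) (f g : (Fin d → ℝ) → ℝ) (hbar : (Fin d → ℝ) × (Fin d → ℝ) → ℝ)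
    (hbar_int : Integrable hbar) (hbar_nn : ∀ᵐ z, 0 ≤ hbar z)
    (hf : Integrable f) (hg : Integrable g) (hf_nn : ∀ᵐ x, 0 ≤ f x)
    (hg_nn : ∀ᵐ y, 0 ≤ g y) (hmass : ∫ x, f x = ∫ y, g y)
    (h : (Fin d → ℝ) × (Fin d → ℝ) → ℝ) (hmem : memGamma d f g hbar h)
    (W : Set ((Fin d → ℝ) × (Fin d → ℝ))) (hW : MeasurableSet W)
    (hind : ∀ᵐ z, h z = Set.indicator W hbar z) :
    ∀ hp hm : (Fin d → ℝ) × (Fin d → ℝ) → ℝ,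
      memGamma d f g hbar hp → memGamma d f g hbar hm →
      (∀ᵐ z, h z = (hp z + hm z) / 2) → hp =ᵐ[volume] hm := by
  intro hp hm hpmem hmmem hmid
  obtain ⟨-, hp_nn, hp_le, -, -⟩ := hpmem
  obtain ⟨-, hm_nn, hm_le, -, -⟩ := hmmem
  filter_upwards [hp_nn, hp_le, hm_nn, hm_le, hmid, hind] with z h1 h2 h3 h4 h5 h6
  by_cases hz : z ∈ W
  · rw [Set.indicator_of_mem hz] at h6; linarith
  · rw [Set.indicator_of_notMem hz] at h6; linarith
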